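/- In the one-dimensional split framework, fix α ≥ 0 and define the penalized impurity decrease Δ_α(s) = (4·P(s)·(1 − P(s)))^α · Δ(s); let s*_α ∈ [a,b] be a maximizer of Δ_α over [a,b] and suppose Δ_α(s*_α) > 0. Then 4·P(s*_α)·(1 − P(s*_α)) ≥ ( 2^{−α}·(1 − α)²·Δ_α(s*_α) / (Ḡ(s*_α)² + (1 − α)²·Δ_α(s*_α)) )^{1/(α+1)}, and both P(s*_α) and 1 − P(s*_α) lie in the closed interval [(1 − √(1 − r))/2, (1 + √(1 − r))/2], where r denotes the quantity ( 2^{−α}·(1 − α)²·Δ_α(s*_α) / (Ḡ(s*_α)² + (1 − α)²·Δ_α(s*_α)) )^{1/(α+1)}. -/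

import Mathlib

open MeasureTheory Set Real Filter Topology

noncomputable section

lemma aux_two_pow (t : ℝ) (ht : 1 ≤ t) : t + 1 ≤ (2:ℝ) ^ t := by
  have h1 : (2:ℝ) ^ t = 2 * 2 ^ (t - 1) := by
    have h := Real.rpow_add (show (0:ℝ) < 2 by norm_num) 1 (t-1)
    rw [Real.rpow_one] at h
    rw [show t = 1 + (t-1) by ring, h]; ring_nf
  have h2 : Real.exp ((t-1) * Real.log 2) = (2:ℝ) ^ (t-1) := by
    rw [Real.rpow_def_of_pos (by norm_num), mul_comm]
  have h3 : 1 + (t-1) * Real.log 2 ≤ (2:ℝ) ^ (t-1) := by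
    rw [← h2]; linarith [Real.add_one_le_exp ((t-1) * Real.log 2)]
  have hl2 : (0.6931471803 : ℝ) < Real.log 2 := Real.log_two_gt_d9
  nlinarith [h3]

lemma aux_scalar (t B : ℝ) (ht : 1 ≤ t) (hB0 : 0 ≤ B) (hB1 : B ≤ 1) :
    (2:ℝ) ^ (1 - t) ≤ 1 - B + B ^ t := by
  have hber : 1 + t * (2*B - 1) ≤ (2*B) ^ t := by
    have := one_add_mul_self_le_rpow_one_add (s := 2*B - 1) (by linarith) ht
    have he : 1 + (2*B - 1) = 2*B := by ring
    rwa [he] at this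
  have hmul : (2*B) ^ t = 2 ^ t * B ^ t := Real.mul_rpow (by norm_num) hB0
  have h2t : (0:ℝ) < 2 ^ t := Real.rpow_pos_of_pos (by norm_num) t
  have h1t : (2:ℝ) ^ (1-t) = 2 / 2 ^ t := by
    rw [Real.rpow_sub (by norm_num), Real.rpow_one]
  have htp1 : t + 1 ≤ (2:ℝ) ^ t := aux_two_pow t ht
  rw [hmul] at hber
  rw [h1t, div_le_iff₀ h2t]
  have hBt : 0 ≤ B ^ t := Real.rpow_nonneg hB0 t
  nlinarith [mul_nonneg hB0 (sub_nonneg.2 htp1), mul_nonneg (sub_nonneg.2 hB1) h2t.le,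
    mul_nonneg (mul_nonneg hB0 (sub_nonneg.2 hB1)) h2t.le]

set_option maxHeartbeats 2000000 in
theorem penalized_best_split_probability_bounds
    (a b : ℝ) (hab : a < b)
    (p g : ℝ → ℝ)
    (hp_cont : ContinuousOn p (Set.Icc a b))
    (hp_pos : ∀ u ∈ Set.Icc a b, 0 < p u)
    (hp_one : (∫ u in a..b, p u) = 1)
    (hg_cont : ContinuousOn g (Set.Icc a b))
    (P M Xi G Δ : ℝ → ℝ)
    (hP : ∀ s, P s = ∫ u in a..s, p u)
    (hM : ∀ s, M s = ∫ u in a..s, g u * p u)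
    (hXi : ∀ s, Xi s = M s - M b * P s)
    (hG : ∀ s, G s = g s - M b)
    (hΔ : ∀ s, Δ s = Xi s ^ 2 / (P s * (1 - P s)))
    (α : ℝ) (hα : 0 ≤ α)
    (Δα : ℝ → ℝ)
    (hΔα : ∀ s, Δα s = (4 * P s * (1 - P s)) ^ α * Δ s)
    (sα : ℝ) (hmem : sα ∈ Set.Icc a b)
    (hmax : ∀ s ∈ Set.Icc a b, Δα s ≤ Δα sα)
    (hpos : 0 < Δα sα)
    (r : ℝ)
    (hr : r = ((2 : ℝ) ^ (-α) * (1 - α) ^ 2 * Δα sα /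
        (G sα ^ 2 + (1 - α) ^ 2 * Δα sα)) ^ (1 / (α + 1))) :
    r ≤ 4 * P sα * (1 - P sα) ∧
    P sα ∈ Set.Icc ((1 - Real.sqrt (1 - r)) / 2) ((1 + Real.sqrt (1 - r)) / 2) ∧
    (1 - P sα) ∈ Set.Icc ((1 - Real.sqrt (1 - r)) / 2) ((1 + Real.sqrt (1 - r)) / 2) := by
  -- basic values
  have hPa : P a = 0 := by rw [hP]; simp
  have hPb : P b = 1 := (hP b).trans hp_one
  have hXia : Xi a = 0 := by rw [hXi, hPa]; rw [hM]; simp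
  have hXib : Xi b = 0 := by rw [hXi, hPb]; ring
  have hΔa : Δα a = 0 := by rw [hΔα, hΔ, hXia]; simp
  have hΔb : Δα b = 0 := by rw [hΔα, hΔ, hXib]; simp
  -- sα is interior
  have hsIoo : sα ∈ Set.Ioo a b := by
    rcases hmem with ⟨h1, h2⟩
    refine ⟨lt_of_le_of_ne h1 ?_, lt_of_le_of_ne h2 ?_⟩
    · intro h; rw [h] at hΔa; linarith
    · intro h; rw [← h] at hΔb; linarith
  -- integrability
  have hpi : ∀ s ∈ Set.Icc a b, IntervalIntegrable p volume a s := by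
    intro s hs
    apply ContinuousOn.intervalIntegrable
    apply hp_cont.mono
    rw [Set.uIcc_of_le hs.1]
    exact Set.Icc_subset_Icc le_rfl hs.2
  have hpi2 : ∀ s ∈ Set.Icc a b, IntervalIntegrable p volume s b := by
    intro s hs
    apply ContinuousOn.intervalIntegrable
    apply hp_cont.mono
    rw [Set.uIcc_of_le hs.2]
    exact Set.Icc_subset_Icc hs.1 le_rfl
  -- positivity of P on Ioo
  have hPpos : ∀ s ∈ Set.Ioo a b, 0 < P s := by
    intro s hs
    rw [hP]
    exact intervalIntegral.intervalIntegral_pos_of_pos_on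
      (hpi s ⟨hs.1.le, hs.2.le⟩)
      (fun x hx => hp_pos x ⟨hx.1.le, hx.2.le.trans hs.2.le⟩) hs.1
  have hPlt : ∀ s ∈ Set.Ioo a b, P s < 1 := by
    intro s hs
    have hadd : (∫ u in a..s, p u) + (∫ u in s..b, p u) = ∫ u in a..b, p u :=
      intervalIntegral.integral_add_adjacent_intervals (hpi s ⟨hs.1.le, hs.2.le⟩)
        (hpi2 s ⟨hs.1.le, hs.2.le⟩)
    have hpos2 : 0 < ∫ u in s..b, p u :=
      intervalIntegral.intervalIntegral_pos_of_pos_on (hpi2 s ⟨hs.1.le, hs.2.le⟩)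
        (fun x hx => hp_pos x ⟨hs.1.le.trans hx.1.le, hx.2.le⟩) hs.2
    rw [hP]
    rw [hp_one] at hadd
    linarith
  set q := P sα with hqdef
  have hq0 : 0 < q := hPpos sα hsIoo
  have hq1 : q < 1 := hPlt sα hsIoo
  have hc : 0 < q * (1 - q) := mul_pos hq0 (by linarith)
  -- derivatives
  have hPd : ∀ s ∈ Set.Ioo a b, HasDerivAt P (p s) s := by
    intro s hs
    have hmeas : StronglyMeasurableAtFilter p (𝓝 s) :=
      (hp_cont.mono Set.Ioo_subset_Icc_self).stronglyMeasurableAtFilter isOpen_Ioo s hs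
    have hca : ContinuousAt p s := hp_cont.continuousAt (Icc_mem_nhds hs.1 hs.2)
    have h := intervalIntegral.integral_hasDerivAt_right (hpi s ⟨hs.1.le, hs.2.le⟩) hmeas hca
    have hPe : P = fun t => ∫ u in a..t, p u := funext hP
    rw [hPe]; exact h
  have hMd : ∀ s ∈ Set.Ioo a b, HasDerivAt M (g s * p s) s := by
    intro s hs
    have hgp : ContinuousOn (fun u => g u * p u) (Set.Icc a b) := hg_cont.mul hp_cont
    have hint : IntervalIntegrable (fun u => g u * p u) volume a s := by
      apply ContinuousOn.intervalIntegrable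
      apply hgp.mono
      rw [Set.uIcc_of_le hs.1.le]
      exact Set.Icc_subset_Icc le_rfl hs.2.le
    have hmeas : StronglyMeasurableAtFilter (fun u => g u * p u) (𝓝 s) :=
      (hgp.mono Set.Ioo_subset_Icc_self).stronglyMeasurableAtFilter isOpen_Ioo s hs
    have hca : ContinuousAt (fun u => g u * p u) s := hgp.continuousAt (Icc_mem_nhds hs.1 hs.2)
    have h := intervalIntegral.integral_hasDerivAt_right hint hmeas hca
    have hMe : M = fun t => ∫ u in a..t, g u * p u := funext hM
    rw [hMe]; exact h
  have hPsα := hPd sα hsIoo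
  have hMsα := hMd sα hsIoo
  have hXid : HasDerivAt Xi ((g sα - M b) * p sα) sα := by
    have h : HasDerivAt (fun s => M s - M b * P s) (g sα * p sα - M b * p sα) sα :=
      hMsα.sub (hPsα.const_mul (M b))
    have hXie : Xi = fun s => M s - M b * P s := funext hXi
    rw [hXie]
    convert h using 1; ring
  have hps : 0 < p sα := hp_pos sα ⟨hsIoo.1.le, hsIoo.2.le⟩
  -- rewrite Δα on Ioo
  have hFeq : ∀ s ∈ Set.Ioo a b, Δα s = 4^α * ((P s * (1 - P s)) ^ (α-1) * Xi s ^ 2) := by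
    intro s hs
    have h0 : 0 < P s * (1 - P s) := mul_pos (hPpos s hs) (by linarith [hPlt s hs])
    rw [hΔα, hΔ, show 4 * P s * (1 - P s) = 4 * (P s * (1 - P s)) by ring,
      Real.mul_rpow (by norm_num) h0.le, Real.rpow_sub_one h0.ne']
    field_simp
  -- local max of the smooth version
  have hlocal : IsLocalMax (fun s => (4:ℝ)^α * ((P s * (1 - P s)) ^ (α-1) * Xi s ^ 2)) sα := by
    have hnh : Set.Ioo a b ∈ 𝓝 sα := isOpen_Ioo.mem_nhds hsIoo
    filter_upwards [hnh] with s hm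
    rw [← hFeq s hm, ← hFeq sα hsIoo]
    exact hmax s (Set.Ioo_subset_Icc_self hm)
  -- derivative of the smooth version
  set A : ℝ := (q * (1 - q)) ^ (α - 2) with hAdef
  have hA : 0 < A := Real.rpow_pos_of_pos hc _
  have hcd : HasDerivAt (fun s => P s * (1 - P s)) ((1 - 2*q) * p sα) sα := by
    have h : HasDerivAt (fun s => P s * (1 - P s)) (p sα * (1 - P sα) + P sα * (0 - p sα)) sα :=
      hPsα.mul ((hasDerivAt_const sα (1:ℝ)).sub hPsα)
    convert h using 1; ring
  have hrd : HasDerivAt (fun s => (P s * (1 - P s)) ^ (α-1))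
      ((α-1) * A * ((1 - 2*q) * p sα)) sα := by
    have h := hcd.rpow_const (p := α - 1) (Or.inl hc.ne')
    convert h using 1
    rw [show α - 1 - 1 = α - 2 by ring]
    ring
  have hXi2 : HasDerivAt (fun s => Xi s ^ 2) (2 * Xi sα * ((g sα - M b) * p sα)) sα := by
    have h : HasDerivAt (fun s => Xi s ^ 2) (((2:ℕ):ℝ) * Xi sα ^ (2 - 1) * ((g sα - M b) * p sα)) sα :=
      hXid.pow 2
    convert h using 1
    norm_num
  have hFd : HasDerivAt (fun s => (4:ℝ)^α * ((P s * (1 - P s)) ^ (α-1) * Xi s ^ 2))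
      ((4:ℝ)^α * (((α-1) * A * ((1 - 2*q) * p sα)) * Xi sα ^ 2 +
        (q * (1 - q)) ^ (α-1) * (2 * Xi sα * ((g sα - M b) * p sα)))) sα :=
    (hrd.mul hXi2).const_mul _
  have hzero := hlocal.hasDerivAt_eq_zero hFd
  have hc1 : (q * (1 - q)) ^ (α - 1) = A * (q * (1 - q)) := by
    rw [show α - 1 = (α - 2) + 1 by ring, Real.rpow_add_one hc.ne']
  rw [hc1] at hzero
  have h4 : (0:ℝ) < 4 ^ α := Real.rpow_pos_of_pos (by norm_num) α
  -- Xi sα ≠ 0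
  have hξ : Xi sα ≠ 0 := by
    intro h
    rw [hΔα, hΔ, h] at hpos
    simp at hpos
  -- bracket identity
  have hbr : (α-1) * (1 - 2*q) * Xi sα ^ 2 +
      2 * (q * (1 - q)) * Xi sα * (g sα - M b) = 0 := by
    have hfac : ((4:ℝ)^α * A * p sα) *
        ((α-1) * (1 - 2*q) * Xi sα ^ 2 + 2 * (q * (1 - q)) * Xi sα * (g sα - M b)) = 0 := by
      linear_combination hzero
    exact (mul_eq_zero.1 hfac).resolve_left
      (ne_of_gt (mul_pos (mul_pos h4 hA) hps))
  have hkey : 2 * (q * (1 - q)) * (g sα - M b) = (1 - α) * (1 - 2*q) * Xi sα := by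
    have h2 : Xi sα * ((α-1) * (1 - 2*q) * Xi sα + 2 * (q * (1 - q)) * (g sα - M b)) = 0 := by
      linear_combination hbr
    have h3 := (mul_eq_zero.1 h2).resolve_left hξ
    linear_combination h3
  -- value of Δα at sα
  have hD : Δα sα = 4^α * ((q * (1 - q)) ^ (α-1) * Xi sα ^ 2) := hFeq sα hsIoo
  have hB1 : 4 * q * (1 - q) ≤ 1 := by linarith [sq_nonneg (1 - 2*q)]
  -- main inequality
  have hmain : r ≤ 4 * q * (1 - q) := by
    by_cases hα1 : α = 1
    · -- degenerate case
      subst hα1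
      have hGb0 : g sα - M b = 0 := by
        have : 2 * (q * (1 - q)) * (g sα - M b) = 0 := by rw [hkey]; ring
        have h2 : (2 * (q * (1 - q))) ≠ 0 := by positivity
        exact (mul_eq_zero.1 this).resolve_left h2
      rw [hG, hGb0] at hr
      have hnum : (2:ℝ)^(-(1:ℝ)) * ((1:ℝ)-1)^2 * Δα sα / ((0:ℝ)^2 + ((1:ℝ)-1)^2 * Δα sα) = 0 := by
        norm_num
      rw [hnum, Real.zero_rpow (by norm_num : 1/((1:ℝ)+1) ≠ 0)] at hr
      rw [hr]
      linarith [hc]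
    · -- nondegenerate case
      have hα1p : (0:ℝ) < α + 1 := by linarith
      have hw : 0 < (1 - α)^2 :=
        sq_pos_of_ne_zero (a := 1 - α) (fun h => hα1 (by linarith [sub_eq_zero.mp h] : α = 1))
      have hξ2 : 0 < Xi sα ^ 2 := sq_pos_of_ne_zero hξ
      have hP2 : 0 < (q * (1 - q)) ^ (α + 1) := Real.rpow_pos_of_pos hc _
      have hF4 : (0:ℝ) < 4 ^ (α + 1) := Real.rpow_pos_of_pos (by norm_num) _
      have hF4e : (4:ℝ) ^ (α + 1) = 4 ^ α * 4 :=
        Real.rpow_add_one (by norm_num : (4:ℝ) ≠ 0) α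
      have hXA : (q * (1 - q)) ^ (α - 1) * (q * (1 - q)) ^ 2 = (q * (1 - q)) ^ (α + 1) := by
        rw [← Real.rpow_natCast (q * (1 - q)) 2, ← Real.rpow_add hc]
        congr 1
        push_cast
        ring
      have hGb2 : (g sα - M b)^2 * (4 * (q * (1 - q))^2) =
          (1 - α)^2 * (1 - 4 * (q * (1 - q))) * Xi sα ^ 2 := by
        linear_combination (2*(q*(1-q))*(g sα - M b) + (1-α)*(1-2*q)*Xi sα) * hkey
      have hBpow : (4 * q * (1 - q)) ^ (α + 1) = 4 ^ (α+1) * (q * (1 - q)) ^ (α+1) := by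
        rw [show 4 * q * (1 - q) = 4 * (q * (1 - q)) by ring,
          Real.mul_rpow (by norm_num) hc.le]
      have hE : (2:ℝ)^(-α) ≤ 1 - 4 * (q * (1 - q)) + 4 ^ (α+1) * (q * (1 - q)) ^ (α+1) := by
        have h := aux_scalar (α + 1) (4 * (q * (1 - q))) (by linarith)
          (by linarith [hc]) (by linarith [sq_nonneg (1 - 2*q)])
        rw [show (1:ℝ) - (α+1) = -α by ring,
          Real.mul_rpow (by norm_num : (0:ℝ) ≤ 4) hc.le] at h
        linarith
      have h2neg : (0:ℝ) < 2 ^ (-α) := Real.rpow_pos_of_pos (by norm_num) _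
      have hE0 : (0:ℝ) < 1 - 4 * (q * (1 - q)) + 4 ^ (α+1) * (q * (1 - q)) ^ (α+1) :=
        lt_of_lt_of_le h2neg hE
      have hdenom : ((g sα - M b)^2 + (1-α)^2 * Δα sα) * (4 * (q * (1 - q))^2) =
          (1-α)^2 * Xi sα ^ 2 *
            (1 - 4 * (q * (1 - q)) + 4 ^ (α+1) * (q * (1 - q)) ^ (α+1)) := by
        rw [hD]
        linear_combination hGb2 + (1-α)^2 * 4 * (4:ℝ)^α * Xi sα ^ 2 * hXA -
          (1-α)^2 * Xi sα ^2 * (q * (1 - q)) ^ (α+1) * hF4e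
      have h4c2 : (0:ℝ) < 4 * (q * (1 - q))^2 := by
        have := pow_pos hc 2; linarith
      have hdpos : 0 < (g sα - M b)^2 + (1-α)^2 * Δα sα := by
        by_contra hle
        push_neg at hle
        have hnp : ((g sα - M b)^2 + (1-α)^2 * Δα sα) * (4 * (q * (1 - q))^2) ≤ 0 :=
          mul_nonpos_iff.mpr (Or.inr ⟨hle, h4c2.le⟩)
        rw [hdenom] at hnp
        linarith [mul_pos (mul_pos hw hξ2) hE0]
      have hK : (2:ℝ)^(-α) * (1-α)^2 * Δα sα / ((g sα - M b)^2 + (1-α)^2 * Δα sα)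
          ≤ (4 * q * (1 - q)) ^ (α + 1) := by
        rw [div_le_iff₀ hdpos, hBpow]
        have hlhs : (2:ℝ)^(-α) * (1-α)^2 * Δα sα * (4 * (q * (1 - q))^2)
            = (2:ℝ)^(-α) * ((1-α)^2 * Xi sα ^2 * (4^(α+1) * (q * (1 - q))^(α+1))) := by
          rw [hD]
          linear_combination (2:ℝ)^(-α) * (1-α)^2 * 4 * (4:ℝ)^α * Xi sα ^ 2 * hXA -
            (2:ℝ)^(-α) * (1-α)^2 * Xi sα ^2 * (q * (1 - q)) ^ (α+1) * hF4e
        rw [← mul_le_mul_iff_of_pos_right h4c2, hlhs, mul_assoc (4^(α+1) * (q * (1 - q))^(α+1)), hdenom]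
        calc (2:ℝ)^(-α) * ((1-α)^2 * Xi sα ^2 * (4^(α+1) * (q * (1 - q))^(α+1)))
            ≤ (1 - 4 * (q * (1 - q)) + 4 ^ (α+1) * (q * (1 - q)) ^ (α+1)) *
              ((1-α)^2 * Xi sα ^2 * (4^(α+1) * (q * (1 - q))^(α+1))) := by
              apply mul_le_mul_of_nonneg_right hE
              exact mul_nonneg (mul_nonneg (sq_nonneg _) hξ2.le) (mul_pos hF4 hP2).le
          _ = 4^(α+1) * (q * (1 - q))^(α+1) *
              ((1-α)^2 * Xi sα ^2 *
                (1 - 4 * (q * (1 - q)) + 4 ^ (α+1) * (q * (1 - q)) ^ (α+1))) := by ring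
      have hK0 : 0 ≤ (2:ℝ)^(-α) * (1-α)^2 * Δα sα / ((g sα - M b)^2 + (1-α)^2 * Δα sα) :=
        div_nonneg (mul_nonneg (mul_nonneg h2neg.le (sq_nonneg _)) hpos.le) hdpos.le
      rw [hr, hG]
      have hstep := Real.rpow_le_rpow hK0 hK (le_of_lt (by positivity : (0:ℝ) < 1 / (α + 1)))
      have hcollapse : ((4 * q * (1 - q)) ^ (α + 1)) ^ (1 / (α + 1)) = 4 * q * (1 - q) := by
        rw [← Real.rpow_mul (by linarith [hc] : (0:ℝ) ≤ 4 * q * (1 - q)),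
          mul_one_div, div_self hα1p.ne', Real.rpow_one]
      rw [hcollapse] at hstep
      exact hstep
  -- conclude
  have h1r : 0 ≤ 1 - r := by linarith
  have hsq : (1 - 2*q)^2 ≤ 1 - r := by linarith [hmain, sq_nonneg q]
  have habs : |1 - 2*q| ≤ Real.sqrt (1 - r) := by
    rw [← Real.sqrt_sq_eq_abs]
    exact Real.sqrt_le_sqrt hsq
  rw [abs_le] at habs
  obtain ⟨hl, hu⟩ := habs
  refine ⟨by linarith [hmain], ⟨by linarith, by linarith⟩, ⟨by linarith, by linarith⟩⟩
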